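/- Let p be a prime, u, m, n natural numbers with p ∤ u, m ≥ 2 if p = 2, and n ≤ 2m − ε where ε = 1 if p = 2 and ε = 0 otherwise. Set k = 1 + u·p^m. Then for all ℓ, i ≥ 0, the ℓ-th iterate of the map Ξ : ℤ/p^nℤ → ℤ/p^nℤ, Ξ(i mod p^n) = S(k,i) mod p^n, satisfies Ξ^ℓ(i mod p^n) = S(k^ℓ, i) mod p^n. -/
import Mathlib

/-- `S x i = 1 + x + ⋯ + x^(i-1)`, with `S x 0 = 0`. -/
def S (x i : ℕ) : ℕ := ∑ t ∈ Finset.range i, x ^ t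

lemma S_add (x a b : ℕ) : S x (a + b) = S x a + x ^ a * S x b := by
  simp only [S, Finset.sum_range_add, Finset.mul_sum, pow_add]

lemma S_one (x : ℕ) : S x 1 = 1 := by simp [S]

lemma le_S (x i : ℕ) (hx : 0 < x) : i ≤ S x i := by
  calc i = ∑ _t ∈ Finset.range i, 1 := by simp
  _ ≤ _ := Finset.sum_le_sum fun t _ => Nat.one_le_pow t x hx

lemma S_sub_dvd (x t : ℕ) : ((x:ℤ) - 1) ∣ (S x t : ℤ) - t := by
  have h : (S x t : ℤ) - t = ∑ j ∈ Finset.range t, ((x:ℤ)^j - 1) := by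
    push_cast [S]
    rw [Finset.sum_sub_distrib]
    simp
  rw [h]
  exact Finset.dvd_sum fun j _ => by simpa using sub_dvd_pow_sub_pow (x:ℤ) 1 j

lemma S_mul (x t : ℕ) : ((x:ℤ) - 1) * (S x t : ℤ) = (x:ℤ)^t - 1 := by
  push_cast [S]
  rw [mul_comm, geom_sum_mul]

theorem stmt_7 (p u m n : ℕ) (hp : p.Prime) (hu : ¬ p ∣ u) (hm : 0 < m)
    (hp2 : p = 2 → 2 ≤ m) (hn : 0 < n)
    (ε : ℕ) (hε : ε = if p = 2 then 1 else 0) (hnm : n ≤ 2 * m - ε)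
    (k : ℕ) (hk : k = 1 + u * p ^ m) (ℓ i : ℕ) :
    (fun z : ZMod (p ^ n) => ((S k z.val : ℕ) : ZMod (p ^ n)))^[ℓ] ((i : ℕ) : ZMod (p ^ n))
      = ((S (k ^ ℓ) i : ℕ) : ZMod (p ^ n)) := by
  set P : ℤ := (p : ℤ) with hP
  have hcase : (p = 2 ∧ ε = 1 ∧ 2 ≤ m) ∨ (p ≠ 2 ∧ ε = 0) := by
    by_cases h : p = 2
    · exact Or.inl ⟨h, by simp [hε, h], hp2 h⟩
    · exact Or.inr ⟨h, by simp [hε, h]⟩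
  have hn2m : n ≤ 2 * m := by rcases hcase with ⟨_, he, hm2⟩ | ⟨_, he⟩ <;> omega
  have hnmm : n - m ≤ m - ε := by rcases hcase with ⟨_, he, hm2⟩ | ⟨_, he⟩ <;> omega
  have hk1 : (k:ℤ) - 1 = (u:ℤ) * P ^ m := by rw [hk]; push_cast; ring
  have hkpos : 0 < k := by omega
  have hPmk1 : P ^ m ∣ (k:ℤ) - 1 := ⟨u, by rw [hk1]; ring⟩
  have hdvd_k1 : ∀ t : ℕ, P ^ m ∣ (k:ℤ)^t - 1 := by
    intro t
    exact hPmk1.trans (by simpa using sub_dvd_pow_sub_pow (k:ℤ) 1 t)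
  -- key lemma D': if p^m ∣ c then S k c ≡ c mod p^n
  have hSc : ∀ c : ℕ, (p^m ∣ c) → P ^ n ∣ (S k c : ℤ) - c := by
    intro c hc
    have expand : (S k c : ℤ) - c = ((k:ℤ) - 1) * ∑ t ∈ Finset.range c, (S k t : ℤ) := by
      have h1 : (S k c : ℤ) - c = ∑ t ∈ Finset.range c, ((k:ℤ)^t - 1) := by
        push_cast [S]
        rw [Finset.sum_sub_distrib]
        simp
      rw [h1, Finset.mul_sum]
      exact Finset.sum_congr rfl fun t _ => (S_mul k t).symm
    rw [expand, hk1]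
    rcases le_or_gt n m with h | h
    · exact dvd_mul_of_dvd_left (dvd_mul_of_dvd_right (pow_dvd_pow P h) _) _
    · -- need P^(n-m) ∣ ∑ S k t
      have hgauss : p ^ (n - m) ∣ ∑ t ∈ Finset.range c, t := by
        have h2 : (∑ t ∈ Finset.range c, t) * 2 = c * (c - 1) := Finset.sum_range_id_mul_two c
        rcases hcase with ⟨hpe, he, hm2⟩ | ⟨hpe, he⟩
        · -- p = 2
          subst hpe
          obtain ⟨d, hd⟩ := hc
          have hsum : (∑ t ∈ Finset.range c, t) = 2 ^ (m-1) * (d * (c-1)) := by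
            have h3 : (∑ t ∈ Finset.range c, t) * 2 = (2 ^ (m-1) * (d * (c-1))) * 2 := by
              rw [h2, hd]
              have : 2 ^ m = 2 ^ (m-1) * 2 := by
                rw [← pow_succ]
                congr 1
                omega
              rw [this]; ring
            exact Nat.eq_of_mul_eq_mul_right (by norm_num) h3
          rw [hsum]
          exact dvd_mul_of_dvd_left (pow_dvd_pow 2 (by omega)) _
        · -- p odd
          have hco : Nat.Coprime (p ^ (n-m)) 2 := by
            apply Nat.Coprime.pow_left
            rw [Nat.coprime_primes hp Nat.prime_two]
            exact hpe
          apply hco.dvd_of_dvd_mul_right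
          rw [h2]
          exact dvd_mul_of_dvd_left ((pow_dvd_pow p (by omega)).trans hc) _
      have hsum1 : P ^ (n - m) ∣ ∑ t ∈ Finset.range c, (S k t : ℤ) := by
        have e1 : P ^ (n - m) ∣ (∑ t ∈ Finset.range c, (S k t : ℤ)) - ∑ t ∈ Finset.range c, (t:ℤ) := by
          rw [← Finset.sum_sub_distrib]
          exact Finset.dvd_sum fun t _ =>
            ((pow_dvd_pow P (by omega)).trans hPmk1).trans (S_sub_dvd k t)
        have e2 : P ^ (n - m) ∣ ∑ t ∈ Finset.range c, (t:ℤ) := by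
          have := Int.natCast_dvd_natCast.mpr hgauss
          push_cast at this ⊢
          exact this
        have := dvd_add e1 e2
        simpa using this
      obtain ⟨w, hw⟩ := hsum1
      refine ⟨u * w, ?_⟩
      rw [hw]
      have : P ^ n = P ^ m * P ^ (n - m) := by rw [← pow_add]; congr 1; omega
      rw [this]; ring
  -- E0: exponent congruence
  have hE0 : ∀ b d : ℕ, (p ^ m ∣ d) → P ^ n ∣ (k:ℤ)^(b+d) - (k:ℤ)^b := by
    intro b d hd
    have h1 : (k:ℤ)^(b+d) - (k:ℤ)^b = (k:ℤ)^b * ((k:ℤ)^d - 1) := by rw [pow_add]; ring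
    rw [h1]
    rcases le_or_gt n m with h | h
    · exact dvd_mul_of_dvd_right ((pow_dvd_pow P h).trans (hdvd_k1 d)) _
    · have h2 : P ^ (n-m) ∣ (S k d : ℤ) := by
        have e1 : P ^ (n-m) ∣ (S k d : ℤ) - d :=
          ((pow_dvd_pow P (by omega)).trans hPmk1).trans (S_sub_dvd k d)
        have e2 : P ^ (n-m) ∣ (d:ℤ) := by
          have h5 : (p:ℕ) ^ (n-m) ∣ d := (pow_dvd_pow p (by omega)).trans hd
          have := Int.natCast_dvd_natCast.mpr h5
          push_cast at this
          exact this
        simpa using dvd_add e1 e2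
      have h3 : (k:ℤ)^d - 1 = (u:ℤ) * P^m * (S k d) := by rw [← S_mul k d, hk1]
      rw [h3]
      obtain ⟨w, hw⟩ := h2
      refine dvd_mul_of_dvd_right ⟨u * w, ?_⟩ _
      rw [hw]
      have : P ^ n = P ^ m * P ^ (n - m) := by rw [← pow_add]; congr 1; omega
      rw [this]; ring
  -- F : S k respects congruence mod p^n
  have hSn : ∀ t : ℕ, (p ^ n ∣ t) → P ^ n ∣ (S k t : ℤ) := by
    intro t ht
    have e2 : P ^ n ∣ (t:ℤ) := by
      have := Int.natCast_dvd_natCast.mpr ht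
      push_cast at this
      exact this
    rcases le_or_gt m n with h | h
    · have := hSc t ((pow_dvd_pow p h).trans ht)
      simpa using dvd_add this e2
    · have e1 : P ^ n ∣ (S k t : ℤ) - t :=
        ((pow_dvd_pow P h.le).trans hPmk1).trans (S_sub_dvd k t)
      simpa using dvd_add e1 e2
  have hF : ∀ a b : ℕ, a ≡ b [MOD p ^ n] → P ^ n ∣ (S k a : ℤ) - (S k b : ℤ) := by
    have key : ∀ a b : ℕ, b ≤ a → a ≡ b [MOD p ^ n] → P ^ n ∣ (S k a : ℤ) - (S k b : ℤ) := by
      intro a b hba hab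
      obtain ⟨t, ht, hat⟩ : ∃ t, p ^ n ∣ t ∧ a = b + t := by
        refine ⟨a - b, (Nat.modEq_iff_dvd' hba).mp hab.symm, by omega⟩
      subst hat
      rw [S_add]
      push_cast
      simpa using dvd_mul_of_dvd_right (hSn t ht) ((k:ℤ)^b)
    intro a b hab
    rcases le_total b a with h | h
    · exact key a b h hab
    · have := key b a h hab.symm
      rw [← neg_sub]
      exact dvd_neg.mpr this
  -- Step B : S k (S (k^L) j) ≡ S (k^(L+1)) j  mod p^n
  have stepB : ∀ L j : ℕ, P ^ n ∣ (S k (S (k^L) j) : ℤ) - (S (k^(L+1)) j : ℤ) := by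
    intro L j
    induction j with
    | zero => simp [S]
    | succ j ih =>
      have hS1 : ∀ x : ℕ, S x (j+1) = S x j + x ^ j := by
        intro x
        rw [S_add, S_one, mul_one]
      rw [hS1 (k^L), hS1 (k^(L+1)), S_add]
      set A := S (k^L) j with hA
      set B := (k^L)^j with hB
      have hBpos : 1 ≤ B := Nat.one_le_pow _ _ (pow_pos hkpos L)
      set c := B - 1 with hc
      have hBc : B = 1 + c := by omega
      have hcastB : (B:ℤ) = (k:ℤ)^(L*j) := by
        rw [hB]; push_cast; rw [← pow_mul]
      have hcastc : (c:ℤ) = (k:ℤ)^(L*j) - 1 := by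
        have h1 : (B:ℤ) = 1 + (c:ℤ) := by exact_mod_cast hBc
        rw [← hcastB]; omega
      have hpc : p ^ m ∣ c := by
        have h1 : ((p^m : ℕ):ℤ) ∣ (c:ℤ) := by
          push_cast
          exact hcastc ▸ hdvd_k1 (L*j)
        exact_mod_cast h1
      have h3 := hSc c hpc
      have hiA : j ≤ A := le_S _ _ (pow_pos hkpos L)
      have hpd : p ^ m ∣ (A - j) := by
        have h1 : P ^ m ∣ (A:ℤ) - j := by
          refine (hdvd_k1 L).trans ?_
          have := S_sub_dvd (k^L) j
          rw [hA]
          push_cast at this ⊢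
          exact this
        have h2 : ((p^m : ℕ):ℤ) ∣ ((A - j : ℕ):ℤ) := by
          rw [Nat.cast_sub hiA]
          push_cast
          exact h1
        exact_mod_cast h2
      have h4 : P ^ n ∣ (k:ℤ)^A - (k:ℤ)^j := by
        have := hE0 j (A - j) hpd
        rwa [Nat.add_sub_cancel' hiA] at this
      have h6 : (k:ℤ)^(L*j) - 1 = (u:ℤ) * P^m * (S k (L*j)) := by
        rw [← S_mul, hk1]
      have h5 : P ^ n ∣ (k:ℤ)^j * (1 + (k:ℤ) * (c:ℤ)) - ((k:ℤ)^(L+1))^j := by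
        have he : (k:ℤ)^j * (1 + (k:ℤ) * (c:ℤ)) - ((k:ℤ)^(L+1))^j
            = (k:ℤ)^j * (((k:ℤ) - 1) * ((k:ℤ)^(L*j) - 1)) := by
          rw [hcastc]; ring
        rw [he, hk1, h6]
        refine (pow_dvd_pow P hn2m).trans ⟨(k:ℤ)^j * (u:ℤ) * ((u:ℤ) * (S k (L*j))), ?_⟩
        rw [show 2*m = m + m by ring, pow_add]
        ring
      have hSB : (S k B : ℤ) = 1 + (k:ℤ) * (S k c : ℤ) := by
        rw [hBc, S_add, S_one]
        push_cast
        ring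
      push_cast
      rw [hSB]
      have deco : ((S k A : ℤ) + (k:ℤ)^A * (1 + (k:ℤ) * (S k c : ℤ)))
            - ((S (k^(L+1)) j : ℤ) + ((k:ℤ)^(L+1))^j)
          = (((S k A : ℤ)) - (S (k^(L+1)) j : ℤ))
            + (((k:ℤ)^A - (k:ℤ)^j) * (1 + (k:ℤ) * (S k c : ℤ)))
            + ((k:ℤ)^(j+1) * ((S k c : ℤ) - (c:ℤ)))
            + ((k:ℤ)^j * (1 + (k:ℤ) * (c:ℤ)) - ((k:ℤ)^(L+1))^j) := by
        ring
      rw [deco]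
      exact dvd_add (dvd_add (dvd_add ih (h4.mul_right _)) (h3.mul_left _)) h5
  -- main induction
  haveI : NeZero (p ^ n) := ⟨pow_ne_zero n hp.pos.ne'⟩
  induction ℓ with
  | zero => simp [S]
  | succ L ih =>
    rw [Function.iterate_succ_apply', ih]
    show ((S k (ZMod.val ((S (k ^ L) i : ℕ) : ZMod (p ^ n))) : ℕ) : ZMod (p ^ n))
        = ((S (k ^ (L+1)) i : ℕ) : ZMod (p ^ n))
    rw [ZMod.natCast_eq_natCast_iff]
    set v := ZMod.val ((S (k ^ L) i : ℕ) : ZMod (p ^ n)) with hv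
    have hvm : v ≡ S (k^L) i [MOD p ^ n] := by
      rw [hv, ZMod.val_natCast]
      exact Nat.mod_modEq _ _
    have hd : P ^ n ∣ (S k v : ℤ) - (S (k^(L+1)) i : ℤ) := by
      have := dvd_add (hF v (S (k^L) i) hvm) (stepB L i)
      rwa [sub_add_sub_cancel] at this
    rw [Nat.modEq_iff_dvd]
    push_cast
    exact dvd_sub_comm.mp hd
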